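/- Fix an integer k ≥ 1 and set d_k = Σ_{j≥0} (2j+k-1)!/(j!(j+k)!) 4^{-j}. Then, as ℓ → ∞, Σ_{j=0}^{ℓ-k-1} (2ℓ-2j-2)!/((ℓ-j-k)!(ℓ-j-k-1)!) · (2j+k-1)!/(j!(j+k)!) ∼ (d_k/√π) · 4^{ℓ-1} · ℓ^{2k-3/2}. -/

import Mathlib

open Filter Real Nat Topology

noncomputable def capA (n : ℕ) : ℝ := (2*n)! * Real.sqrt n / (((n)! : ℝ)^2 * 4 ^ n)

lemma capA_eq (n : ℕ) (hn : 1 ≤ n) :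
    capA n = Stirling.stirlingSeq (2*n) / (Stirling.stirlingSeq n)^2 := by
  have hn0 : (0:ℝ) < n := by exact_mod_cast hn
  have hs : (0:ℝ) < Real.sqrt n := Real.sqrt_pos.2 hn0
  have hs4 : Real.sqrt (2*(2*n:ℕ) : ℝ) = 2 * Real.sqrt n := by
    push_cast
    rw [show (2:ℝ) * (2*n) = 4 * n by ring, show (4:ℝ)*n = 2^2 * n by norm_num,
      Real.sqrt_mul (by positivity), Real.sqrt_sq (by norm_num)]
  have hpe : (0:ℝ) < ((n:ℝ) / Real.exp 1) ^ n := by positivity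
  have hfac : (0:ℝ) < (n)! := by exact_mod_cast Nat.factorial_pos n
  have hpow : (((2*n:ℕ):ℝ) / Real.exp 1) ^ (2*n) = 4^n * (((n:ℝ)/Real.exp 1)^n)^2 := by
    push_cast
    rw [show (2*(n:ℝ))/Real.exp 1 = 2 * ((n:ℝ)/Real.exp 1) by ring, mul_pow,
      show 2*n = n*2 from mul_comm 2 n, pow_mul, ← pow_mul,
      show (4:ℝ)^n = (2^2)^n by norm_num, ← pow_mul]
    ring
  have hsq : Real.sqrt n * Real.sqrt n = n := Real.mul_self_sqrt hn0.le
  have h2 : Real.sqrt (2*(n:ℝ)) * Real.sqrt (2*(n:ℝ)) = 2 * n :=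
    Real.mul_self_sqrt (by positivity)
  have hX : (0:ℝ) < Real.sqrt (2*(n:ℝ)) := Real.sqrt_pos.2 (by positivity)
  unfold capA Stirling.stirlingSeq
  rw [hs4, hpow]
  field_simp
  ring_nf
  have h22 : (Real.sqrt 2)^2 = 2 := Real.sq_sqrt (by norm_num)
  rw [Real.sq_sqrt hn0.le, Real.sq_sqrt (by positivity)]

lemma tendsto_capA : Tendsto capA atTop (𝓝 (1 / Real.sqrt π)) := by
  have hπ : (0:ℝ) < Real.sqrt π := Real.sqrt_pos.2 Real.pi_pos
  have h2 : Tendsto (fun n : ℕ => 2*n) atTop atTop :=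
    tendsto_atTop_mono (fun n => Nat.le_mul_of_pos_left n two_pos) tendsto_id
  have hA : Tendsto (fun n => Stirling.stirlingSeq (2*n) / (Stirling.stirlingSeq n)^2)
      atTop (𝓝 (Real.sqrt π / (Real.sqrt π)^2)) :=
    (Stirling.tendsto_stirlingSeq_sqrt_pi.comp h2).div
      (Stirling.tendsto_stirlingSeq_sqrt_pi.pow 2) (by positivity)
  have : Real.sqrt π / (Real.sqrt π)^2 = 1 / Real.sqrt π := by
    rw [sq]
    field_simp
  rw [this] at hA
  refine hA.congr' ?_
  filter_upwards [eventually_ge_atTop 1] with n hn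
  exact (capA_eq n hn).symm

lemma central_sq_le (n : ℕ) : ((2*n)!)^2 * (3*n+1) ≤ ((n)!)^4 * 16^n := by
  induction n with
  | zero => simp
  | succ n ih =>
    have h1 : (2*(n+1))! = (2*n)! * ((2*n+1)*(2*n+2)) := by
      have : 2*(n+1) = (2*n+1)+1 := by ring
      rw [this, Nat.factorial_succ, show 2*n+1 = (2*n)+1 from rfl, Nat.factorial_succ]
      ring
    have h2 : ((n+1))! = (n)! * (n+1) := by
      rw [Nat.factorial_succ]; ring
    rw [h1, h2]
    have key : ((2*n+1)*(2*n+2))^2 * (3*(n+1)+1) ≤ (n+1)^4 * 16 * (3*n+1) := by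
      nlinarith [sq_nonneg n, n.zero_le]
    calc ((2*n)! * ((2*n+1)*(2*n+2)))^2 * (3*(n+1)+1)
        = ((2*n)!)^2 * (((2*n+1)*(2*n+2))^2 * (3*(n+1)+1)) := by ring
      _ ≤ ((2*n)!)^2 * ((n+1)^4 * 16 * (3*n+1)) := Nat.mul_le_mul_left _ key
      _ = (((2*n)!)^2 * (3*n+1)) * ((n+1)^4 * 16) := by ring
      _ ≤ (((n)!)^4 * 16^n) * ((n+1)^4 * 16) := Nat.mul_le_mul_right _ ih
      _ = ((n)! * (n+1))^4 * 16^(n+1) := by ring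

lemma central_real_le (n : ℕ) : ((2*n)! : ℝ) * Real.sqrt n ≤ ((n)! : ℝ)^2 * 4^n := by
  have h1 : ((2*n)! : ℝ) * Real.sqrt n ≤ ((2*n)! : ℝ) * Real.sqrt (3*n+1) := by
    apply mul_le_mul_of_nonneg_left _ (by positivity)
    exact Real.sqrt_le_sqrt (by push_cast; linarith [Nat.cast_nonneg (α := ℝ) n])
  refine h1.trans ?_
  have hsq : (((2*n)! : ℝ) * Real.sqrt (3*n+1))^2 ≤ (((n)! : ℝ)^2 * 4^n)^2 := by
    have h := central_sq_le n
    have h' : (((2*n)!)^2 * (3*n+1) : ℝ) ≤ (((n)!)^4 * 16^n : ℝ) := by exact_mod_cast h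
    calc (((2*n)! : ℝ) * Real.sqrt (3*n+1))^2
        = ((2*n)! : ℝ)^2 * (Real.sqrt (3*n+1))^2 := by ring
      _ = ((2*n)! : ℝ)^2 * (3*n+1) := by
          rw [Real.sq_sqrt (by positivity)]
      _ ≤ (((n)!)^4 * 16^n : ℝ) := h'
      _ = (((n)! : ℝ)^2 * 4^n)^2 := by
          push_cast
          rw [show ((16:ℝ))^n = (4^2)^n by norm_num, ← pow_mul, mul_comm 2 n, pow_mul]
          ring
  have h2 := Real.sqrt_le_sqrt hsq
  rwa [Real.sqrt_sq (by positivity), Real.sqrt_sq (by positivity)] at h2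


lemma cj_nat_le (j : ℕ) : ∀ k, 1 ≤ k → (2*j+k-1)! * ((j)! * (j+1)) ≤ 2^(k-1) * ((2*j)! * (j+k)!) := by
  refine Nat.le_induction ?_ ?_
  · simp [Nat.factorial_succ]
    rw [Nat.mul_comm ((2*j)!)]
    exact Nat.le_of_eq (by ring)
  · intro k hk ih
    have h1 : (2*j+(k+1)-1)! = (2*j+k) * (2*j+k-1)! := by
      have : 2*j+(k+1)-1 = (2*j+k-1)+1 := by omega
      rw [this, Nat.factorial_succ]
      congr 1
      omega
    have h2 : (j+(k+1))! = (j+k+1) * (j+k)! := by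
      rw [show j+(k+1) = (j+k)+1 from by omega, Nat.factorial_succ]
    have h3 : 2^(k+1-1) = 2 * 2^(k-1) := by
      rw [show k+1-1 = (k-1)+1 from by omega, pow_succ]
      ring
    rw [h1, h2, h3]
    calc (2*j+k) * (2*j+k-1)! * ((j)! * (j+1))
        = (2*j+k) * ((2*j+k-1)! * ((j)! * (j+1))) := by ring
      _ ≤ (2*j+k) * (2^(k-1) * ((2*j)! * (j+k)!)) := Nat.mul_le_mul_left _ ih
      _ ≤ (2*(j+k+1)) * (2^(k-1) * ((2*j)! * (j+k)!)) := by
          apply Nat.mul_le_mul_right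
          omega
      _ = 2 * 2^(k-1) * ((2*j)! * ((j+k+1) * (j+k)!)) := by ring

lemma central_real_le3 (n : ℕ) : ((2*n)! : ℝ) * Real.sqrt (3*(n:ℝ)+1) ≤ ((n)! : ℝ)^2 * 4^n := by
  have h := central_sq_le n
  have h' : (((2*n)!)^2 * (3*n+1) : ℝ) ≤ (((n)!)^4 * 16^n : ℝ) := by exact_mod_cast h
  have hsq : (((2*n)! : ℝ) * Real.sqrt (3*(n:ℝ)+1))^2 ≤ (((n)! : ℝ)^2 * 4^n)^2 := by
    calc (((2*n)! : ℝ) * Real.sqrt (3*(n:ℝ)+1))^2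
        = ((2*n)! : ℝ)^2 * (Real.sqrt (3*(n:ℝ)+1))^2 := by ring
      _ = ((2*n)! : ℝ)^2 * (3*(n:ℝ)+1) := by rw [Real.sq_sqrt (by positivity)]
      _ ≤ (((n)!)^4 * 16^n : ℝ) := by push_cast at h' ⊢; linarith
      _ = (((n)! : ℝ)^2 * 4^n)^2 := by
          rw [show ((16:ℝ))^n = (4^2)^n by norm_num, ← pow_mul, mul_comm 2 n, pow_mul]
          ring
  have h2 := Real.sqrt_le_sqrt hsq
  rwa [Real.sqrt_sq (by positivity), Real.sqrt_sq (by positivity)] at h2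

lemma c_le (k j : ℕ) (hk : 1 ≤ k) :
    ((2*j+k-1)! : ℝ) / ((j)! * (j+k)!) * (1/4)^j
      ≤ 2^(k-1) / (((j:ℝ)+1) * Real.sqrt ((j:ℝ)+1)) := by
  have hj1 : (0:ℝ) < (j:ℝ)+1 := by positivity
  have hsqp : (0:ℝ) < Real.sqrt ((j:ℝ)+1) := Real.sqrt_pos.2 hj1
  have hfj : (0:ℝ) < ((j)! : ℝ) := by exact_mod_cast Nat.factorial_pos j
  have hfjk : (0:ℝ) < ((j+k)! : ℝ) := by exact_mod_cast Nat.factorial_pos (j+k)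
  have hA : ((2*j+k-1)! : ℝ) * ((j)! * ((j:ℝ)+1)) ≤ 2^(k-1) * ((2*j)! * (j+k)!) := by
    have := cj_nat_le j k hk
    have h' : (((2*j+k-1)! * ((j)! * (j+1)) : ℕ) : ℝ) ≤ ((2^(k-1) * ((2*j)! * (j+k)!) : ℕ) : ℝ) := by
      exact_mod_cast this
    push_cast at h'
    convert h' using 2 <;> push_cast <;> ring
  have hB := central_real_le3 j
  have hs13 : Real.sqrt ((j:ℝ)+1) ≤ Real.sqrt (3*(j:ℝ)+1) := Real.sqrt_le_sqrt (by linarith)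
  have master : ((2*j+k-1)! : ℝ) * (((j:ℝ)+1) * Real.sqrt ((j:ℝ)+1))
      ≤ 2^(k-1) * (((j)! : ℝ) * (j+k)! * 4^j) := by
    refine le_of_mul_le_mul_right ?_ hfj
    calc ((2*j+k-1)! : ℝ) * (((j:ℝ)+1) * Real.sqrt ((j:ℝ)+1)) * (j)!
        = (((2*j+k-1)! : ℝ) * ((j)! * ((j:ℝ)+1))) * Real.sqrt ((j:ℝ)+1) := by ring
      _ ≤ (2^(k-1) * (((2*j)! : ℝ) * (j+k)!)) * Real.sqrt ((j:ℝ)+1) :=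
          mul_le_mul_of_nonneg_right hA hsqp.le
      _ ≤ (2^(k-1) * (((2*j)! : ℝ) * (j+k)!)) * Real.sqrt (3*(j:ℝ)+1) := by
          apply mul_le_mul_of_nonneg_left hs13 (by positivity)
      _ = 2^(k-1) * ((j+k)! : ℝ) * (((2*j)! : ℝ) * Real.sqrt (3*(j:ℝ)+1)) := by ring
      _ ≤ 2^(k-1) * ((j+k)! : ℝ) * (((j)! : ℝ)^2 * 4^j) := by
          apply mul_le_mul_of_nonneg_left hB (by positivity)
      _ = 2^(k-1) * (((j)! : ℝ) * (j+k)! * 4^j) * (j)! := by ring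
  have hrw : ((2*j+k-1)! : ℝ) / ((j)! * (j+k)!) * (1/4)^j
      = ((2*j+k-1)! : ℝ) / (((j)! : ℝ) * (j+k)! * 4^j) := by
    rw [div_mul_eq_mul_div, one_div, inv_pow, ← div_eq_mul_inv, div_div, mul_comm ((4:ℝ)^j)]
  rw [hrw, div_le_div_iff₀ (by positivity) (by positivity)]
  calc ((2*j+k-1)! : ℝ) * (((j:ℝ)+1) * Real.sqrt ((j:ℝ)+1))
      ≤ 2^(k-1) * (((j)! : ℝ) * (j+k)! * 4^j) := master
    _ = 2^(k-1) * (((j)! : ℝ) * (j+k)! * 4^j) := rfl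

lemma rpow32 (x : ℝ) (hx : 0 < x) : x * Real.sqrt x = x ^ ((3:ℝ)/2) := by
  rw [show ((3:ℝ)/2) = 1 + 1/2 by norm_num, Real.rpow_add hx, Real.rpow_one,
    ← Real.sqrt_eq_rpow]

lemma summable_bound (k : ℕ) :
    Summable (fun j : ℕ => (2:ℝ)^(k-1) / (((j:ℝ)+1) * Real.sqrt ((j:ℝ)+1))) := by
  apply Summable.mul_left
  have h : Summable (fun j : ℕ => 1 / ((j:ℝ)) ^ ((3:ℝ)/2)) :=
    Real.summable_one_div_nat_rpow.mpr (by norm_num)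
  have h2 := (summable_nat_add_iff 1).mpr h
  refine h2.congr fun j => ?_
  push_cast
  rw [rpow32 _ (by positivity), one_div]

lemma summable_c (k : ℕ) (hk : 1 ≤ k) :
    Summable (fun j : ℕ => ((2*j+k-1)! : ℝ) / ((j)! * (j+k)!) * (1/4)^j) := by
  refine Summable.of_nonneg_of_le (fun j => by positivity) (fun j => c_le k j hk) (summable_bound k)

lemma factorial_add_prod (n r : ℕ) : (n + r)! = (n)! * ∏ i ∈ Finset.range r, (n + i + 1) := by
  induction r with
  | zero => simp
  | succ r ih =>
    rw [Finset.prod_range_succ, show n + (r+1) = (n+r)+1 from rfl, Nat.factorial_succ, ih]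
    ring

lemma factorial_add_prod_real (n r : ℕ) :
    ((n + r)! : ℝ) = ((n)! : ℝ) * ∏ i ∈ Finset.range r, ((n:ℝ) + (i:ℝ) + 1) := by
  rw [factorial_add_prod n r]
  push_cast
  ring

noncomputable def capP (k m : ℕ) : ℝ :=
  ∏ i ∈ Finset.range (2*k-2), ((2*(m:ℝ) + (i:ℝ) + 1) / (2*(m:ℝ)))

noncomputable def capE (k m : ℕ) : ℝ :=
  ((2*m+2*k-2)! : ℝ) /
    (((m)! : ℝ) * (((m-1))! : ℝ) * 4^(m+k-1) * (m:ℝ)^(2*(k:ℝ)-3/2))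

lemma rpow_split (k m : ℕ) (hk : 1 ≤ k) (hm : 1 ≤ m) :
    (m:ℝ)^(2*(k:ℝ)-3/2) = (m:ℝ)^(2*k-2) * Real.sqrt m := by
  have hm0 : (0:ℝ) < m := by exact_mod_cast hm
  have : (2*(k:ℝ)-3/2) = ((2*k-2 : ℕ) : ℝ) + 1/2 := by
    have : ((2*k-2 : ℕ) : ℝ) = 2*(k:ℝ) - 2 := by
      push_cast [Nat.cast_sub (by omega : 2 ≤ 2*k)]
      ring
    rw [this]; ring
  rw [this, Real.rpow_add hm0, Real.rpow_natCast, ← Real.sqrt_eq_rpow]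

lemma capE_eq (k m : ℕ) (hk : 1 ≤ k) (hm : 1 ≤ m) : capE k m = capA m * capP k m := by
  have hm0 : (0:ℝ) < m := by exact_mod_cast hm
  have hsq : Real.sqrt m * Real.sqrt m = m := Real.mul_self_sqrt hm0.le
  have hs : (0:ℝ) < Real.sqrt m := Real.sqrt_pos.2 hm0
  have hfm : (0:ℝ) < ((m)! : ℝ) := by exact_mod_cast Nat.factorial_pos m
  have hfm1 : (0:ℝ) < (((m-1))! : ℝ) := by exact_mod_cast Nat.factorial_pos (m-1)
  have hfact : ((m)! : ℝ) = (m:ℝ) * ((m-1)! : ℝ) := by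
    conv_lhs => rw [show m = (m-1)+1 from by omega]
    rw [Nat.factorial_succ]
    push_cast [Nat.sub_add_cancel hm]
    ring
  have hnum : ((2*m+2*k-2)! : ℝ)
      = ((2*m)! : ℝ) * ∏ i ∈ Finset.range (2*k-2), (2*(m:ℝ) + (i:ℝ) + 1) := by
    have h1 : 2*m+2*k-2 = 2*m + (2*k-2) := by omega
    rw [h1, factorial_add_prod_real]
    push_cast
    congr 1
  have h4 : (4:ℝ)^(m+k-1) = 4^m * 4^(k-1) := by
    rw [← pow_add]
    congr 1
    omega
  have hP : capP k m = (∏ i ∈ Finset.range (2*k-2), (2*(m:ℝ) + (i:ℝ) + 1)) / ((2*(m:ℝ))^(2*k-2)) := by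
    rw [capP, Finset.prod_div_distrib, Finset.prod_const, Finset.card_range]
  have h2m : (2*(m:ℝ))^(2*k-2) = 4^(k-1) * (m:ℝ)^(2*k-2) := by
    rw [mul_pow, show (4:ℝ)^(k-1) = 2^(2*k-2) from by
      rw [show (4:ℝ) = 2^2 from by norm_num, ← pow_mul]
      congr 1
      omega]
  have hm2 : (0:ℝ) < (m:ℝ)^(2*k-2) := by positivity
  rw [capE, capA, hnum, h4, hP, rpow_split k m hk hm, hfact, h2m]
  field_simp
  ring_nf
  linear_combination (-1:ℝ) * hsq

lemma capA_nonneg (m : ℕ) : 0 ≤ capA m := by unfold capA; positivity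

lemma capA_le_one (m : ℕ) : capA m ≤ 1 := by
  unfold capA
  rw [div_le_one (by positivity)]
  exact central_real_le m

lemma capP_nonneg (k m : ℕ) : 0 ≤ capP k m := by
  unfold capP
  apply Finset.prod_nonneg
  intro i _
  positivity

lemma capP_le (k m : ℕ) (hm : 1 ≤ m) :
    capP k m ≤ ∏ i ∈ Finset.range (2*k-2), (((i:ℝ))+3)/2 := by
  have hm0 : (1:ℝ) ≤ m := by exact_mod_cast hm
  apply Finset.prod_le_prod
  · intro i _; positivity
  · intro i _
    rw [div_le_div_iff₀ (by linarith) (by norm_num)]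
    have hi : (0:ℝ) ≤ i := Nat.cast_nonneg i
    nlinarith

lemma capP_tendsto (k : ℕ) : Tendsto (fun m : ℕ => capP k m) atTop (𝓝 1) := by
  have h : Tendsto (fun m : ℕ => ∏ i ∈ Finset.range (2*k-2),
      ((2*(m:ℝ) + (i:ℝ) + 1) / (2*(m:ℝ)))) atTop
      (𝓝 (∏ _i ∈ Finset.range (2*k-2), (1:ℝ))) := by
    apply tendsto_finset_prod
    intro i _
    have h0 : Tendsto (fun m : ℕ => 1 + ((i:ℝ)+1)/2 * (1/(m:ℝ))) atTop (𝓝 (1 + ((i:ℝ)+1)/2 * 0)) :=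
      tendsto_const_nhds.add (tendsto_const_nhds.mul tendsto_one_div_atTop_nhds_zero_nat)
    rw [mul_zero, add_zero] at h0
    apply h0.congr'
    filter_upwards [eventually_ge_atTop 1] with m hm
    have hm0 : (0:ℝ) < m := by exact_mod_cast hm
    field_simp
    ring
  rw [Finset.prod_const_one] at h
  exact h

lemma tendsto_capE (k : ℕ) (hk : 1 ≤ k) :
    Tendsto (fun m : ℕ => capE k m) atTop (𝓝 (1 / Real.sqrt π)) := by
  have h := tendsto_capA.mul (capP_tendsto k)
  rw [mul_one] at h
  apply h.congr'
  filter_upwards [eventually_ge_atTop 1] with m hm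
  exact (capE_eq k m hk hm).symm

lemma capE_le (k m : ℕ) (hk : 1 ≤ k) (hm : 1 ≤ m) :
    capE k m ≤ ∏ i ∈ Finset.range (2*k-2), (((i:ℝ))+3)/2 := by
  rw [capE_eq k m hk hm]
  calc capA m * capP k m ≤ 1 * (∏ i ∈ Finset.range (2*k-2), (((i:ℝ))+3)/2) :=
        mul_le_mul (capA_le_one m) (capP_le k m hm) (capP_nonneg k m)
          zero_le_one
    _ = _ := one_mul _

lemma capE_nonneg (k m : ℕ) : 0 ≤ capE k m := by
  unfold capE
  positivity

section Main
variable (k : ℕ)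

noncomputable def cF (k : ℕ) (ℓ j : ℕ) : ℝ :=
  if j + k < ℓ then
    ((2 * ℓ - 2 * j - 2)! : ℝ) / (((ℓ - j - k)! : ℝ) * ((ℓ - j - k - 1)! : ℝ)) *
        (((2 * j + k - 1)! : ℝ) / (((j)! : ℝ) * ((j + k)! : ℝ))) /
      (4 ^ (ℓ - 1) * (ℓ : ℝ) ^ (2 * (k : ℝ) - 3 / 2))
  else 0

lemma cF_eq (k ℓ j : ℕ) (hk : 1 ≤ k) (h : j + k < ℓ) :
    cF k ℓ j = ((2*j+k-1)! : ℝ) / ((j)! * (j+k)!) * (1/4)^j *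
      (capE k (ℓ-j-k) * (((ℓ-j-k : ℕ) : ℝ)^(2*(k:ℝ)-3/2) / (ℓ : ℝ)^(2*(k:ℝ)-3/2))) := by
  have hm : 1 ≤ ℓ - j - k := by omega
  set m := ℓ - j - k with hmdef
  have hℓ0 : (0:ℝ) < ℓ := by
    have : 1 ≤ ℓ := by omega
    exact_mod_cast this
  have e1 : 2 * ℓ - 2 * j - 2 = 2*m+2*k-2 := by omega
  have e2 : ℓ - j - k - 1 = m - 1 := rfl
  have e3 : (4:ℝ) ^ (ℓ - 1) = 4^(m+k-1) * 4^j := by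
    rw [← pow_add]
    congr 1
    omega
  have hmp : (0:ℝ) < (m:ℝ)^(2*(k:ℝ)-3/2) :=
    Real.rpow_pos_of_pos (by exact_mod_cast hm) _
  have hlp : (0:ℝ) < (ℓ:ℝ)^(2*(k:ℝ)-3/2) := Real.rpow_pos_of_pos hℓ0 _
  have hfm : (0:ℝ) < ((m)! : ℝ) := by exact_mod_cast Nat.factorial_pos m
  have hfm1 : (0:ℝ) < ((m-1)! : ℝ) := by exact_mod_cast Nat.factorial_pos (m-1)
  have hfj : (0:ℝ) < ((j)! : ℝ) := by exact_mod_cast Nat.factorial_pos j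
  have hfjk : (0:ℝ) < ((j+k)! : ℝ) := by exact_mod_cast Nat.factorial_pos (j+k)
  rw [cF, if_pos h, e1, e2, e3, capE]
  field_simp
  rw [← hmdef, mul_assoc, ← mul_pow]
  norm_num

lemma cF_tendsto (k j : ℕ) (hk : 1 ≤ k) :
    Tendsto (fun ℓ => cF k ℓ j) atTop
      (𝓝 (((2*j+k-1)! : ℝ) / ((j)! * (j+k)!) * (1/4)^j * (1 / Real.sqrt π))) := by
  have hE : Tendsto (fun ℓ : ℕ => capE k (ℓ - j - k)) atTop (𝓝 (1 / Real.sqrt π)) := by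
    have := (tendsto_capE k hk).comp (tendsto_sub_atTop_nat (j + k))
    apply this.congr fun ℓ => ?_
    simp only [Function.comp_apply]
    congr 1
    omega
  have hbase : Tendsto (fun ℓ : ℕ => ((ℓ - j - k : ℕ) : ℝ) / (ℓ : ℝ)) atTop (𝓝 1) := by
    have h0 : Tendsto (fun ℓ : ℕ => 1 - ((j:ℝ)+(k:ℝ)) * (1/(ℓ:ℝ))) atTop
        (𝓝 (1 - ((j:ℝ)+(k:ℝ)) * 0)) :=
      tendsto_const_nhds.sub (tendsto_const_nhds.mul tendsto_one_div_atTop_nhds_zero_nat)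
    rw [mul_zero, sub_zero] at h0
    apply h0.congr'
    filter_upwards [eventually_ge_atTop (j+k+1)] with ℓ hℓ
    have hℓ0 : (0:ℝ) < ℓ := by
      have : 1 ≤ ℓ := by omega
      exact_mod_cast this
    rw [show ℓ - j - k = ℓ - (j+k) from by omega, Nat.cast_sub (by omega)]
    push_cast
    field_simp
  have hrat : Tendsto (fun ℓ : ℕ => (((ℓ - j - k : ℕ) : ℝ) / (ℓ : ℝ)) ^ (2*(k:ℝ)-3/2))
      atTop (𝓝 1) := by
    have hc := (Real.continuousAt_rpow_const 1 (2*(k:ℝ)-3/2) (Or.inl one_ne_zero)).tendsto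
    have := hc.comp hbase
    simpa [Real.one_rpow, Function.comp_def] using this
  have hmain : Tendsto (fun ℓ : ℕ => ((2*j+k-1)! : ℝ) / ((j)! * (j+k)!) * (1/4)^j *
      (capE k (ℓ-j-k) * ((((ℓ-j-k : ℕ) : ℝ) / (ℓ:ℝ))^(2*(k:ℝ)-3/2)))) atTop
      (𝓝 (((2*j+k-1)! : ℝ) / ((j)! * (j+k)!) * (1/4)^j * ((1 / Real.sqrt π) * 1))) :=
    tendsto_const_nhds.mul (hE.mul hrat)
  rw [mul_one] at hmain
  apply hmain.congr'
  filter_upwards [eventually_ge_atTop (j+k+1)] with ℓ hℓ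
  rw [cF_eq k ℓ j hk (by omega)]
  congr 2
  rw [Real.div_rpow (by positivity) (by positivity)]

lemma cF_bound (k ℓ j : ℕ) (hk : 1 ≤ k) :
    ‖cF k ℓ j‖ ≤ ((2*j+k-1)! : ℝ) / ((j)! * (j+k)!) * (1/4)^j *
      (∏ i ∈ Finset.range (2*k-2), (((i:ℝ))+3)/2) := by
  have hK : (0:ℝ) ≤ ∏ i ∈ Finset.range (2*k-2), (((i:ℝ))+3)/2 :=
    Finset.prod_nonneg fun i _ => by positivity
  by_cases h : j + k < ℓ
  · rw [cF_eq k ℓ j hk h]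
    have hm : 1 ≤ ℓ - j - k := by omega
    have hm0 : (0:ℝ) < ((ℓ - j - k : ℕ) : ℝ) := by exact_mod_cast hm
    have hℓ0 : (0:ℝ) < (ℓ:ℝ) := by
      have : 1 ≤ ℓ := by omega
      exact_mod_cast this
    have hratle : (((ℓ-j-k : ℕ) : ℝ)^(2*(k:ℝ)-3/2) / (ℓ : ℝ)^(2*(k:ℝ)-3/2)) ≤ 1 := by
      rw [div_le_one (Real.rpow_pos_of_pos hℓ0 _)]
      apply Real.rpow_le_rpow hm0.le
      · have : ℓ - j - k ≤ ℓ := by omega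
        exact_mod_cast this
      · have : (1:ℝ) ≤ k := by exact_mod_cast hk
        linarith
    have hratnn : (0:ℝ) ≤ (((ℓ-j-k : ℕ) : ℝ)^(2*(k:ℝ)-3/2) / (ℓ : ℝ)^(2*(k:ℝ)-3/2)) := by
      positivity
    have hEb := capE_le k (ℓ-j-k) hk hm
    have hnn : (0:ℝ) ≤ ((2*j+k-1)! : ℝ) / ((j)! * (j+k)!) * (1/4)^j := by positivity
    rw [Real.norm_eq_abs, abs_of_nonneg
      (mul_nonneg hnn (mul_nonneg (capE_nonneg k _) hratnn))]
    refine mul_le_mul_of_nonneg_left ?_ hnn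
    have := mul_le_mul hEb hratle hratnn hK
    rwa [mul_one] at this
  · rw [cF, if_neg h, norm_zero]
    exact mul_nonneg (by positivity) hK

lemma main_tendsto (hk : 1 ≤ k) :
    Tendsto (fun ℓ => ∑' j, cF k ℓ j) atTop
      (𝓝 ((∑' j : ℕ, ((2*j+k-1)! : ℝ) / ((j)! * (j+k)!) * (1/4)^j) * (1 / Real.sqrt π))) := by
  have h := tendsto_tsum_of_dominated_convergence
    (f := fun ℓ j => cF k ℓ j)
    (g := fun j => ((2*j+k-1)! : ℝ) / ((j)! * (j+k)!) * (1/4)^j * (1 / Real.sqrt π))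
    (bound := fun j => ((2*j+k-1)! : ℝ) / ((j)! * (j+k)!) * (1/4)^j *
      (∏ i ∈ Finset.range (2*k-2), (((i:ℝ))+3)/2))
    ((summable_c k hk).mul_right _)
    (fun j => cF_tendsto k j hk)
    (Eventually.of_forall fun ℓ j => cF_bound k ℓ j hk)
  rwa [tsum_mul_right] at h

lemma tsum_S_eq (ℓ : ℕ) (hk : 1 ≤ k) :
    ∑' j, cF k ℓ j =
      (∑ j ∈ Finset.range (ℓ - k),
        ((2 * ℓ - 2 * j - 2)! : ℝ) / (((ℓ - j - k)! : ℝ) * ((ℓ - j - k - 1)! : ℝ)) *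
        (((2 * j + k - 1)! : ℝ) / (((j)! : ℝ) * ((j + k)! : ℝ)))) /
      (4 ^ (ℓ - 1) * (ℓ : ℝ) ^ (2 * (k : ℝ) - 3 / 2)) := by
  rw [tsum_eq_sum (s := Finset.range (ℓ - k)) (f := fun j => cF k ℓ j)
    (fun b hb => by
      simp only [Finset.mem_range] at hb
      simp only [cF]
      rw [if_neg (by omega)])]
  rw [Finset.sum_div]
  refine Finset.sum_congr rfl fun j hj => ?_
  simp only [Finset.mem_range] at hj
  simp only [cF]
  rw [if_pos (by omega)]
end Main

theorem stmt_10 (k : ℕ) (hk : 1 ≤ k) :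
    Tendsto
      (fun ℓ : ℕ =>
        (∑ j ∈ Finset.range (ℓ - k),
            (Nat.factorial (2 * ℓ - 2 * j - 2) : ℝ) /
                ((Nat.factorial (ℓ - j - k) : ℝ) * Nat.factorial (ℓ - j - k - 1)) *
              ((Nat.factorial (2 * j + k - 1) : ℝ) /
                (Nat.factorial j * Nat.factorial (j + k)))) /
          ((∑' j : ℕ, (Nat.factorial (2 * j + k - 1) : ℝ) /
              (Nat.factorial j * Nat.factorial (j + k)) * (1 / 4) ^ j) / Real.sqrt Real.pi *
            4 ^ (ℓ - 1) * (ℓ : ℝ) ^ (2 * (k : ℝ) - 3 / 2)))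
      atTop (nhds 1) := by
  set T : ℝ := ∑' j : ℕ, ((2*j+k-1)! : ℝ) / ((j)! * (j+k)!) * (1/4)^j with hT
  have hTpos : 0 < T := by
    refine Summable.tsum_pos (summable_c k hk) (fun j => by positivity) 0 ?_
    have h1 : (0:ℝ) < ((2*0+k-1)! : ℝ) := by exact_mod_cast Nat.factorial_pos _
    have h2 : (0:ℝ) < ((0)! : ℝ) * ((0+k)! : ℝ) := by
      have : (0:ℝ) < ((0+k)! : ℝ) := by exact_mod_cast Nat.factorial_pos _
      simpa [Nat.factorial_zero] using this
    positivity
  have hsp : (0:ℝ) < Real.sqrt π := Real.sqrt_pos.2 Real.pi_pos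
  have hC : T * (1 / Real.sqrt π) ≠ 0 := by positivity
  have h := (main_tendsto k hk).div_const (T * (1 / Real.sqrt π))
  rw [div_self hC] at h
  apply h.congr fun ℓ => ?_
  rw [tsum_S_eq k ℓ hk]
  rw [div_div]
  congr 1
  rw [hT]
  field_simp
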